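/- Tonks' vertex map via head-insertion: for every n ≥ 1 and every permutation π ∈ S_n, the tree φ(π) (defined recursively by splitting at the last entry: φ(π) = φ(std(π^{<π_n})) ∨ φ(std(π^{>π_n}))) equals ε(h(w(π))), the evaluation of the head-insertion encoding of the reversed permutation. -/

import Mathlib

/-- Indexed terms of the language `L^I`: generators `2^k` and partial compositions. -/
inductive Trm : Type
  | gen : ℕ → Trm
  | comp : Trm → ℕ → Trm → Trm
deriving DecidableEq

namespace Trm

/-- Arity `|A|`. -/
def arity : Trm → ℕ
  | gen _ => 2
  | comp A _ B => A.arity + B.arity - 1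

/-- Set of indices occurring in a term. -/
def ind : Trm → Finset ℕ
  | gen k => {k}
  | comp A _ B => A.ind ∪ B.ind

/-- Root index. -/
def root : Trm → ℕ
  | gen k => k
  | comp A _ _ => A.root

/-- Number of occurrences of the generator. -/
def countGen : Trm → ℕ
  | gen _ => 1
  | comp A _ B => A.countGen + B.countGen

end Trm

/-- The congruence `=_I` generated by (assoc1) and (assoc2). -/
inductive IEq : Trm → Trm → Prop
  | refl (A : Trm) : IEq A A
  | symm {A B} : IEq A B → IEq B A
  | trans {A B C} : IEq A B → IEq B C → IEq A C
  | congr {A A' B B'} (n : ℕ) : IEq A A' → IEq B B' →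
      IEq (Trm.comp A n B) (Trm.comp A' n B')
  | assoc1 (A B C : Trm) (n m : ℕ) : n ≤ m → m < n + B.arity →
      IEq (Trm.comp (Trm.comp A n B) m C) (Trm.comp A n (Trm.comp B (m - n + 1) C))
  | assoc2 (A B C : Trm) (n m : ℕ) : n + B.arity ≤ m →
      IEq (Trm.comp (Trm.comp A n B) m C) (Trm.comp (Trm.comp A (m - B.arity + 1) C) n B)

/-- Planar binary trees. -/
inductive BT : Type
  | leaf : BT
  | node : BT → BT → BT
deriving DecidableEq

namespace BT

/-- Number of leaves. -/
def leaves : BT → ℕ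
  | leaf => 1
  | node l r => l.leaves + r.leaves

/-- Graft `S` at the `i`-th leaf (1-indexed) of a tree. -/
def graft : BT → ℕ → BT → BT
  | leaf, _, S => S
  | node l r, i, S =>
    if i ≤ l.leaves then node (l.graft i S) r else node l (r.graft (i - l.leaves) S)

end BT

/-- Evaluation `ε` of indexed terms to planar binary trees. -/
def Trm.eval : Trm → BT
  | Trm.gen _ => BT.node BT.leaf BT.leaf
  | Trm.comp A i B => A.eval.graft i B.eval

/-- `l`-factors. -/
inductive LFactor : Trm → Prop
  | gen (k : ℕ) : LFactor (Trm.gen k)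
  | step {A : Trm} (j : ℕ) : LFactor A → j ∉ A.ind →
      LFactor (Trm.comp A ((A.ind.filter (· < j)).card + 1) (Trm.gen j))

/-- Auxiliary for the head-insertion encoding: `done` is the list of already
inserted letters. -/
def hAux : Trm → List ℕ → List ℕ → Trm
  | A, _, [] => A
  | A, done, y :: rest =>
      hAux (Trm.comp A ((done.filter (· < y)).length + 1) (Trm.gen y)) (done ++ [y]) rest

/-- Head-insertion encoding `h` (junk value on the empty word). -/
def hWord : List ℕ → Trm
  | [] => Trm.gen 0
  | x :: rest => hAux (Trm.gen x) [x] rest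

/-- `u_a(x)`: number of letters to the left of `x` in `a` that are greater than `x`. -/
def uCount (a : List ℕ) (x : ℕ) : ℕ := ((a.takeWhile (· ≠ x)).filter (x < ·)).length

/-- Decreasing rearrangement of a word. -/
def sortDesc (a : List ℕ) : List ℕ := (a.mergeSort (· ≤ ·)).reverse

/-- Decreasing encoding `f` (junk value on the empty word). -/
def fWord (a : List ℕ) : Trm :=
  match sortDesc a with
  | [] => Trm.gen 0
  | k :: rest => rest.foldl (fun A x => Trm.comp A (uCount a x + 1) (Trm.gen x)) (Trm.gen k)

/-- Standardization of a word of distinct integers. -/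
def std (a : List ℕ) : List ℕ := a.map (fun x => (a.filter (· ≤ x)).length)

/-- Tonks' vertex map, splitting form `φ`. -/
def tonksPhi (a : List ℕ) : BT :=
  match ha : a.getLast? with
  | none => BT.leaf
  | some x =>
      BT.node (tonksPhi (std (a.filter (· < x)))) (tonksPhi (std (a.filter (x < ·))))
termination_by a.length
decreasing_by
  · have hx : x ∈ a := List.mem_of_mem_getLast? (Option.mem_def.mpr ha)
    have : (a.filter (· < x)).length < a.length := by
      apply List.length_filter_lt_length_iff_exists.2
      exact ⟨x, hx, by simp⟩
    simp [std, -List.length_filter_lt_length_iff_exists]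
    refine lt_of_lt_of_eq ?_ List.length_attach
    exact List.length_filter_lt_length_iff_exists.2 ⟨⟨x, hx⟩, List.mem_attach _ _, by simp⟩
  · have hx : x ∈ a := List.mem_of_mem_getLast? (Option.mem_def.mpr ha)
    have : (a.filter (x < ·)).length < a.length := by
      apply List.length_filter_lt_length_iff_exists.2
      exact ⟨x, hx, by simp⟩
    simp [std, -List.length_filter_lt_length_iff_exists]
    refine lt_of_lt_of_eq ?_ List.length_attach
    exact List.length_filter_lt_length_iff_exists.2 ⟨⟨x, hx⟩, List.mem_attach _ _, by simp⟩

/-- Tonks' vertex map, head-grafting form `φ̂`. -/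
def phiHat : List ℕ → BT
  | [] => BT.leaf
  | x :: rest => (phiHat (std rest)).graft x (BT.node BT.leaf BT.leaf)
termination_by a => a.length
decreasing_by
  simp [std]

/-- The Loday–Ronco map `ψ`. -/
def lodayPsi (a : List ℕ) : BT :=
  match hm : a.maximum with
  | none => BT.leaf
  | some m =>
      let i := a.idxOf m
      BT.node (lodayPsi (std (a.take i))) (lodayPsi (std (a.drop (i + 1))))
termination_by a.length
decreasing_by
  · have hmem : m ∈ a := List.maximum_mem hm
    have hi : a.idxOf m < a.length := List.idxOf_lt_length_iff.2 hmem
    simp only [std, List.length_map, List.length_take]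
    omega
  · have : a ≠ [] := by rintro rfl; simp [List.maximum] at hm
    have : 0 < a.length := List.length_pos_iff.2 this
    simp only [std, List.length_map, List.length_drop]
    omega

/-- Inverse of a permutation word on `{1,…,n}`. -/
def invWord (π : List ℕ) : List ℕ :=
  (List.range π.length).map (fun j => π.idxOf (j + 1) + 1)

/-- One Tamari (right rotation) step, at any subtree. -/
inductive TamariStep : BT → BT → Prop
  | rot (X Y Z : BT) : TamariStep (BT.node (BT.node X Y) Z) (BT.node X (BT.node Y Z))
  | left {l l'} (r : BT) : TamariStep l l' → TamariStep (BT.node l r) (BT.node l' r)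
  | right (l : BT) {r r'} : TamariStep r r' → TamariStep (BT.node l r) (BT.node l r')

/-- The Tamari order. -/
def TamariLE : BT → BT → Prop := Relation.ReflTransGen TamariStep

/-- The strict Tamari order. -/
def TamariLT : BT → BT → Prop := Relation.TransGen TamariStep

/-- One cover of the right weak Bruhat order on words. -/
inductive BruhatStep : List ℕ → List ℕ → Prop
  | swap (α : List ℕ) {u v : ℕ} (β : List ℕ) : u < v →
      BruhatStep (α ++ u :: v :: β) (α ++ v :: u :: β)

/-- The right weak Bruhat order on words. -/
def BruhatLE : List ℕ → List ℕ → Prop := Relation.ReflTransGen BruhatStep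

/-- Head-insertion index `k(a; σ)`. -/
def kIdx (a : ℕ) (σ : List ℕ) : ℕ := 1 + (σ.filter (· < a)).length


namespace TonksAux

/-- Tree-level head insertion fold. -/
def hIns : BT → List ℕ → List ℕ → BT
  | T, _, [] => T
  | T, done, y :: rest =>
      hIns (T.graft ((done.filter (· < y)).length + 1) (BT.node BT.leaf BT.leaf))
        (done ++ [y]) rest

lemma leaves_pos (t : BT) : 1 ≤ t.leaves := by
  induction t with
  | leaf => simp [BT.leaves]
  | node l r ihl ihr => simp only [BT.leaves]; omega

lemma graft_leaves (T : BT) (i : ℕ) (S : BT) :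
    (T.graft i S).leaves = T.leaves + S.leaves - 1 := by
  induction T generalizing i with
  | leaf => simp [BT.graft, BT.leaves]
  | node l r ihl ihr =>
      rw [BT.graft]
      split
      · have h1 := leaves_pos S; have h2 := leaves_pos l
        simp only [BT.leaves, ihl]; omega
      · have h1 := leaves_pos S; have h2 := leaves_pos r
        simp only [BT.leaves, ihr]; omega

lemma eval_hAux : ∀ (rest done : List ℕ) (A : Trm),
    (hAux A done rest).eval = hIns A.eval done rest := by
  intro rest
  induction rest with
  | nil => intro done A; rfl
  | cons y rest ih =>
      intro done A
      rw [hAux, hIns, ih]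
      rfl

lemma filter_lt_of_le {y x : ℕ} (h : y ≤ x) (l : List ℕ) :
    (l.filter (· < x)).filter (· < y) = l.filter (· < y) := by
  rw [List.filter_filter]
  apply List.filter_congr
  intro z _
  by_cases hz : z < y
  · simp [hz, Nat.lt_of_lt_of_le hz h]
  · simp [hz]

lemma hIns_split (x : ℕ) : ∀ (rest dl dr done : List ℕ) (Tl Tr : BT),
    done.Perm (dl ++ x :: dr) → (∀ z ∈ dl, z < x) → (∀ z ∈ dr, x < z) → x ∉ rest →
    Tl.leaves = dl.length + 1 →
    hIns (BT.node Tl Tr) done rest =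
      BT.node (hIns Tl dl (rest.filter (· < x))) (hIns Tr dr (rest.filter (x < ·))) := by
  intro rest
  induction rest with
  | nil => intro dl dr done Tl Tr _ _ _ _ _; rfl
  | cons y rest ih =>
      intro dl dr done Tl Tr hperm hdl hdr hxr hleaves
      have hyx : y ≠ x := fun h => hxr (h ▸ (List.mem_cons_self : y ∈ y :: rest))
      have hxrest : x ∉ rest := fun h => hxr (List.mem_cons_of_mem y h)
      have hcount : (done.filter (· < y)).length =
          (dl.filter (· < y)).length + (if x < y then 1 else 0) + (dr.filter (· < y)).length := by
        have h1 : (done.filter (· < y)).length = ((dl ++ x :: dr).filter (· < y)).length :=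
          (hperm.filter _).length_eq
        rw [h1, List.filter_append, List.filter_cons, List.length_append]
        by_cases hxy : x < y
        · simp [hxy]
          omega
        · simp [hxy]
      rcases Nat.lt_or_ge y x with hlt | hge
      · -- y < x : insertion goes into the left subtree
        have hdr0 : dr.filter (· < y) = [] := by
          apply List.filter_eq_nil_iff.mpr
          intro z hz
          have := hdr z hz
          simp only [decide_eq_true_eq]
          omega
        have hk : (done.filter (· < y)).length = (dl.filter (· < y)).length := by
          rw [hcount, hdr0, if_neg (by omega)]
          simp
        have hle : (dl.filter (· < y)).length + 1 ≤ Tl.leaves := by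
          have := dl.length_filter_le (fun z => decide (z < y))
          omega
        rw [hIns, hk, BT.graft, if_pos hle]
        have hfl : (y :: rest).filter (· < x) = y :: rest.filter (· < x) := by
          simp [hlt]
        have hfr : (y :: rest).filter (x < ·) = rest.filter (x < ·) := by
          simp only [List.filter_cons, decide_eq_true_eq, if_neg (by omega : ¬ x < y)]
        rw [hfl, hfr]
        conv_rhs => rw [hIns]
        apply ih (dl ++ [y]) dr (done ++ [y])
        · have p1 : (done ++ [y]).Perm ((dl ++ x :: dr) ++ [y]) := hperm.append_right [y]
          have p2 : ((dl ++ x :: dr) ++ [y]).Perm ((dl ++ [y]) ++ x :: dr) := by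
            simp only [List.append_assoc, List.singleton_append, List.cons_append]
            exact List.Perm.append_left dl
              (by simpa using (List.perm_append_comm (l₁ := x :: dr) (l₂ := [y])))
          exact p1.trans p2
        · intro z hz
          rcases List.mem_append.mp hz with h | h
          · exact hdl z h
          · simp only [List.mem_singleton] at h; omega
        · exact hdr
        · exact hxrest
        · rw [graft_leaves, hleaves]
          simp only [BT.leaves, List.length_append, List.length_cons, List.length_nil]
          omega
      · -- x < y : insertion goes into the right subtree
        have hxy : x < y := lt_of_le_of_ne hge (Ne.symm hyx)
        have hdlfull : dl.filter (· < y) = dl := by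
          apply List.filter_eq_self.mpr
          intro z hz
          have := hdl z hz
          simp only [decide_eq_true_eq]
          omega
        have hk : (done.filter (· < y)).length = dl.length + 1 + (dr.filter (· < y)).length := by
          rw [hcount, hdlfull, if_pos hxy]
        have hgt : ¬ ((done.filter (· < y)).length + 1 ≤ Tl.leaves) := by
          rw [hk, hleaves]; omega
        have hsub : (done.filter (· < y)).length + 1 - Tl.leaves =
            (dr.filter (· < y)).length + 1 := by
          rw [hk, hleaves]; omega
        rw [hIns, BT.graft, if_neg hgt, hsub]
        have hfl : (y :: rest).filter (· < x) = rest.filter (· < x) := by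
          simp only [List.filter_cons, decide_eq_true_eq, if_neg (by omega : ¬ y < x)]
        have hfr : (y :: rest).filter (x < ·) = y :: rest.filter (x < ·) := by
          simp [hxy]
        rw [hfl, hfr]
        conv_rhs => rw [hIns]
        apply ih dl (dr ++ [y]) (done ++ [y])
        · have h1 : (done ++ [y]).Perm ((dl ++ x :: dr) ++ [y]) := hperm.append_right [y]
          simpa [List.append_assoc] using h1
        · exact hdl
        · intro z hz
          rcases List.mem_append.mp hz with h | h
          · exact hdr z h
          · simp only [List.mem_singleton] at h; omega
        · exact hxrest
        · exact hleaves

lemma hWord_eval (y : ℕ) (r : List ℕ) :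
    (hWord (y :: r)).eval = hIns BT.leaf [] (y :: r) := by
  rw [hWord, eval_hAux]
  rfl

lemma hIns_map (g : ℕ → ℕ) : ∀ (rest done : List ℕ) (T : BT),
    (∀ u ∈ done ++ rest, ∀ v ∈ done ++ rest, (g u < g v ↔ u < v)) →
    hIns T (done.map g) (rest.map g) = hIns T done rest := by
  intro rest
  induction rest with
  | nil => intro done T _; rfl
  | cons y rest ih =>
      intro done T hg
      rw [List.map_cons, hIns, hIns]
      have hcnt : ((done.map g).filter (· < g y)).length = (done.filter (· < y)).length := by
        rw [← List.countP_eq_length_filter, ← List.countP_eq_length_filter, List.countP_map]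
        apply List.countP_congr
        intro z hz
        have := hg z (by simp [hz]) y (by simp)
        simpa using this
      rw [hcnt]
      have hma : List.map g done ++ [g y] = List.map g (done ++ [y]) := by simp
      rw [hma]
      apply ih
      intro u hu v hv
      apply hg <;> simp at hu hv ⊢ <;> tauto

lemma filter_le_absorb {u v : ℕ} (h : u ≤ v) (l : List ℕ) :
    (l.filter (· ≤ v)).filter (· ≤ u) = l.filter (· ≤ u) := by
  rw [List.filter_filter]
  apply List.filter_congr
  intro z _
  by_cases hz : z ≤ u
  · simp [hz, le_trans hz h]
  · simp [hz]

lemma cnt_le_mono {u v : ℕ} (h : u ≤ v) (l : List ℕ) :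
    (l.filter (· ≤ u)).length ≤ (l.filter (· ≤ v)).length := by
  rw [← filter_le_absorb h l]
  exact (List.filter_sublist).length_le

lemma cnt_lt_of_lt {u v : ℕ} (huv : u < v) {l : List ℕ} (hv : v ∈ l) :
    (l.filter (· ≤ u)).length < (l.filter (· ≤ v)).length := by
  have hle := cnt_le_mono (Nat.le_of_lt huv) l
  rcases Nat.lt_or_ge (l.filter (· ≤ u)).length (l.filter (· ≤ v)).length with h | h
  · exact h
  · exfalso
    have hlen : (l.filter (· ≤ u)).length = (l.filter (· ≤ v)).length :=
      le_antisymm hle (by omega)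
    have hsub : ((l.filter (· ≤ v)).filter (· ≤ u)).Sublist (l.filter (· ≤ v)) :=
      List.filter_sublist
    rw [filter_le_absorb (Nat.le_of_lt huv) l] at hsub
    have heq := hsub.eq_of_length hlen
    have hvmem : v ∈ l.filter (· ≤ v) := List.mem_filter.mpr ⟨hv, by simp⟩
    rw [← heq] at hvmem
    have := (List.mem_filter.mp hvmem).2
    simp only [decide_eq_true_eq] at this
    omega

lemma std_length (l : List ℕ) : (std l).length = l.length := by simp [std]

lemma std_nodup {l : List ℕ} (h : l.Nodup) : (std l).Nodup := by
  simp only [std]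
  apply h.map_on
  intro u hu v hv heq
  by_contra hne
  rcases Nat.lt_or_gt_of_ne hne with hlt | hlt
  · exact absurd heq (Nat.ne_of_lt (cnt_lt_of_lt hlt hv))
  · exact absurd heq (Nat.ne_of_gt (cnt_lt_of_lt hlt hu))

lemma hIns_std (l : List ℕ) (T : BT) :
    hIns T [] (std l).reverse = hIns T [] l.reverse := by
  have hstd : (std l).reverse = l.reverse.map (fun x => (l.filter (· ≤ x)).length) := by
    simp [std, List.map_reverse]
  rw [hstd]
  apply hIns_map (fun x => (l.filter (· ≤ x)).length) l.reverse [] T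
  intro u hu v hv
  simp only [List.nil_append, List.mem_reverse] at hu hv
  constructor
  · intro h
    by_contra h'
    push_neg at h'
    exact absurd h (not_lt.2 (cnt_le_mono h' l))
  · intro h
    exact cnt_lt_of_lt h hv

lemma tonksPhi_nil : tonksPhi [] = BT.leaf := by
  rw [tonksPhi]
  rfl

lemma tonksPhi_last {a : List ℕ} {x : ℕ} (ha : a.getLast? = some x) :
    tonksPhi a = BT.node (tonksPhi (std (a.filter (· < x))))
      (tonksPhi (std (a.filter (x < ·)))) := by
  rw [tonksPhi]
  split
  · rename_i h; rw [ha] at h; cases h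
  · rename_i y h; rw [ha] at h; cases h; rfl

lemma mainG : ∀ (n : ℕ) (a : List ℕ), a.length ≤ n → a.Nodup → a ≠ [] →
    tonksPhi a = (hWord a.reverse).eval := by
  intro n
  induction n with
  | zero =>
      intro a h _ hne
      exact absurd (List.length_eq_zero_iff.mp (Nat.le_zero.mp h)) hne
  | succ n ih =>
      intro a hlen hnd hne
      set x := a.getLast hne with hxdef
      have ha : a.getLast? = some x := List.getLast?_eq_getLast hne
      have hsp : a.dropLast ++ [x] = a := List.dropLast_append_getLast hne
      have hxa : x ∈ a := a.getLast_mem hne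
      have hxb : x ∉ a.dropLast := by
        have hnd' : (a.dropLast ++ [x]).Nodup := by rw [hsp]; exact hnd
        intro hmem
        exact (List.nodup_append'.mp hnd').2.2 hmem (List.mem_singleton_self x)
      have hrev : a.reverse = x :: a.dropLast.reverse := by
        conv_lhs => rw [← hsp]
        simp
      have hbL : a.dropLast.filter (· < x) = a.filter (· < x) := by
        conv_rhs => rw [← hsp]
        simp [List.filter_append]
      have hbR : a.dropLast.filter (x < ·) = a.filter (x < ·) := by
        conv_rhs => rw [← hsp]
        simp [List.filter_append]
      have key : (hWord a.reverse).eval =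
          BT.node (hIns BT.leaf [] (a.filter (· < x)).reverse)
            (hIns BT.leaf [] (a.filter (x < ·)).reverse) := by
        rw [hrev, hWord, eval_hAux]
        have hx' : x ∉ a.dropLast.reverse := by simpa using hxb
        have hsplit := hIns_split x a.dropLast.reverse [] [] [x] BT.leaf BT.leaf
          (List.Perm.refl _) (by simp) (by simp) hx' rfl
        calc hIns (Trm.gen x).eval [x] a.dropLast.reverse
            = hIns (BT.node BT.leaf BT.leaf) [x] a.dropLast.reverse := rfl
          _ = BT.node (hIns BT.leaf [] (a.dropLast.reverse.filter (· < x)))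
                (hIns BT.leaf [] (a.dropLast.reverse.filter (x < ·))) := hsplit
          _ = BT.node (hIns BT.leaf [] (a.filter (· < x)).reverse)
                (hIns BT.leaf [] (a.filter (x < ·)).reverse) := by
              rw [List.filter_reverse, List.filter_reverse, hbL, hbR]
      have comp : ∀ l : List ℕ, l.Sublist a → x ∉ l →
          tonksPhi (std l) = hIns BT.leaf [] l.reverse := by
        intro l hsub hxl
        by_cases h0 : l = []
        · subst h0
          exact tonksPhi_nil
        · have hlenl : l.length < a.length := by
            rcases Nat.lt_or_ge l.length a.length with h | h
            · exact h
            · have heq := hsub.eq_of_length (le_antisymm hsub.length_le h)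
              exact absurd (heq ▸ hxa) hxl
          have hstdne : std l ≠ [] := by
            intro h
            simp only [std] at h
            exact h0 (by simpa using h)
          have h1 := ih (std l) (by rw [std_length]; omega) (std_nodup (hnd.sublist hsub)) hstdne
          have h2 : (hWord (std l).reverse).eval = hIns BT.leaf [] (std l).reverse := by
            cases hsl : (std l).reverse with
            | nil => exact absurd (by simpa using hsl) hstdne
            | cons y r => rw [hWord_eval]
          rw [h1, h2, hIns_std]
      rw [key, tonksPhi_last ha]
      rw [comp (a.filter (· < x)) (a.filter_sublist) (by simp),
        comp (a.filter (x < ·)) (a.filter_sublist) (by simp)]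

end TonksAux

theorem tonksPhi_via_h (n : ℕ) (hn : 1 ≤ n) (π : List ℕ)
    (hperm : π.Perm (List.range' 1 n)) :
    tonksPhi π = (hWord π.reverse).eval := by
  have hnd : π.Nodup := hperm.nodup_iff.mpr (List.nodup_range' (h := Nat.one_pos))
  have hne : π ≠ [] := by
    intro h
    subst h
    have := hperm.length_eq
    simp at this
    omega
  exact TonksAux.mainG π.length π le_rfl hnd hne
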